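/- For every k ≥ 0 and every b_0 ∈ B: rank(b_0) = k if and only if b_0 ∈ N_k \ N_{k+1}. In particular, every nonzero element b_0 ∈ N_{k+1}^c satisfies rank(b_0) = k. -/

import Mathlib

private lemma sum_Icc_bot {M : Type*} [AddCommMonoid M] {a b : ℕ} (h : a ≤ b) (f : ℕ → M) :
    ∑ v ∈ Finset.Icc a b, f v = f a + ∑ v ∈ Finset.Icc (a+1) b, f v := by
  rw [Finset.Icc_eq_cons_Ioc h, Finset.sum_cons, ← Finset.Icc_add_one_left_eq_Ioc]

private lemma sum_Icc_shift {M : Type*} [AddCommMonoid M] (a b : ℕ) (f : ℕ → M) :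
    ∑ v ∈ Finset.Icc (a+1) (b+1), f v = ∑ v ∈ Finset.Icc a b, f (v+1) := by
  rw [← Finset.map_add_right_Icc a b 1, Finset.sum_map]; rfl

private lemma sum_Icc_one {M : Type*} [AddCommMonoid M] (n : ℕ) (f : ℕ → M) :
    ∑ u ∈ Finset.Icc 1 n, f u = ∑ i ∈ Finset.range n, f (i+1) := by
  induction n with
  | zero => simp
  | succ n ih =>
      rw [Finset.sum_Icc_succ_top (by omega) f, ih, Finset.sum_range_succ]




theorem stmt_6
    {𝕂 : Type*} [RCLike 𝕂]
    {B B' : Type*} [AddCommGroup B] [Module 𝕂 B]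
    [AddCommGroup B'] [Module 𝕂 B']
    (L : ℕ → B →ₗ[𝕂] B')
    (Sb S : ℕ → B →ₗ[𝕂] B')
    (N Nc : ℕ → Submodule 𝕂 B)
    (R Rc : ℕ → Submodule 𝕂 B')
    (P : ℕ → B' →ₗ[𝕂] B')
    (T : ℕ → B' →ₗ[𝕂] B)
    (E M : ℕ → ℕ → B →ₗ[𝕂] B)
    (hL : ∃ i, L i ≠ 0)
    (hN0 : N 0 = ⊤) (hRc0 : Rc 0 = ⊤)
    (hSb1 : Sb 1 = L 0)
    (hSbrec : ∀ k, 1 ≤ k → Sb (k + 1) = ∑ i ∈ Finset.Icc 1 k, (L i).comp (M i k))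
    (hSdef : ∀ k, S (k + 1) = Sb (k + 1) - ∑ i ∈ Finset.Icc 1 k, (P i).comp (Sb (k + 1)))
    (hNdef : ∀ k, N (k + 1) = LinearMap.ker (S (k + 1)) ⊓ N k)
    (hRdef : ∀ k, R (k + 1) = Submodule.map (S (k + 1)) (N k))
    (hNcompl : ∀ k, Disjoint (Nc (k + 1)) (N (k + 1)) ∧ Nc (k + 1) ⊔ N (k + 1) = N k)
    (hRcompl : ∀ k, Disjoint (R (k + 1)) (Rc (k + 1)) ∧ R (k + 1) ⊔ Rc (k + 1) = Rc k)
    (hPrange : ∀ i, 1 ≤ i → LinearMap.range (P i) ≤ R i)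
    (hPid : ∀ i, 1 ≤ i → ∀ y ∈ R i, P i y = y)
    (hPzeroRc : ∀ i, 1 ≤ i → ∀ y ∈ Rc i, P i y = 0)
    (hPzeroR : ∀ i j, 1 ≤ j → j < i → ∀ y ∈ R j, P i y = 0)
    (hTrange : ∀ i, 1 ≤ i → ∀ y, T i y ∈ Nc i)
    (hTS : ∀ i, 1 ≤ i → ∀ x ∈ Nc i, T i (S i x) = x)
    (hST : ∀ i, 1 ≤ i → ∀ y, S i (T i y) = P i y)
    (hE11 : E 1 1 = LinearMap.id)
    (hEdiag : ∀ k, E (k + 1) (k + 1) = LinearMap.id)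
    (hErec : ∀ k i, 1 ≤ i → i ≤ k →
      E i (k + 1) = -((T i).comp (∑ v ∈ Finset.Icc (i + 1) (k + 1), (Sb v).comp (E v (k + 1)))))
    (hM11 : M 1 1 = LinearMap.id)
    (hM1 : ∀ k, 1 ≤ k → M 1 (k + 1) = E 1 (k + 1))
    (hMrec : ∀ k a, 2 ≤ a → a ≤ k + 1 →
      M a (k + 1) = ∑ b ∈ Finset.Icc (a - 1) k, (M (a - 1) b).comp (E (b + 1) (k + 1)))
    (rank : B → ℕ∞)
    (hrank : ∀ b0 : B, rank b0 = sSup {x : ℕ∞ | ∃ m : ℕ, 1 ≤ m ∧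
      (∃ b : ℕ → B, b 0 = b0 ∧
        ∀ l, l + 1 ≤ m → ∑ i ∈ Finset.range (l + 1), L i (b (l - i)) = 0) ∧ x = (m : ℕ∞)})
    :
    ∀ k : ℕ,
      (∀ b0 : B, rank b0 = (k : ℕ∞) ↔ (b0 ∈ N k ∧ b0 ∉ N (k + 1))) ∧
      (∀ b0 ∈ Nc (k + 1), b0 ≠ 0 → rank b0 = (k : ℕ∞)) := by

  -- S 1 = L 0 pointwise
  have hS1 : ∀ x, S 1 x = L 0 x := by
    intro x
    rw [hSdef 0]
    simp [hSb1]
  -- N is antitone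
  have hNstep : ∀ k, N (k+1) ≤ N k := by
    intro k; rw [hNdef k]; exact inf_le_right
  have hNmono : ∀ a b : ℕ, a ≤ b → N b ≤ N a := by
    intro a b h
    induction h with
    | refl => exact le_rfl
    | step h ih => exact le_trans (hNstep _) ih
  -- S vanishes on N
  have hSN : ∀ k x, x ∈ N (k+1) → S (k+1) x = 0 := by
    intro k x hx
    rw [hNdef k] at hx
    exact hx.1
  -- Rc antitone, R u ≤ Rc w for w < u
  have hRcstep : ∀ k, Rc (k+1) ≤ Rc k := by
    intro k; rw [← (hRcompl k).2]; exact le_sup_right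
  have hRcmono : ∀ a b : ℕ, a ≤ b → Rc b ≤ Rc a := by
    intro a b h
    induction h with
    | refl => exact le_rfl
    | step h ih => exact le_trans (hRcstep _) ih
  have hRsubRc : ∀ u w : ℕ, w < u → R u ≤ Rc w := by
    intro u w h
    obtain ⟨t, rfl⟩ : ∃ t, u = t + 1 := ⟨u - 1, by omega⟩
    calc R (t+1) ≤ Rc t := by rw [← (hRcompl t).2]; exact le_sup_left
    _ ≤ Rc w := hRcmono _ _ (by omega)
  -- the projections recover elements of R u, for u ≤ k
  have hQR : ∀ k u : ℕ, 1 ≤ u → u ≤ k → ∀ y ∈ R u, ∑ w ∈ Finset.Icc 1 k, P w y = y := by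
    intro k u hu huk y hy
    rw [Finset.sum_eq_single u]
    · exact hPid u hu y hy
    · intro w hw hne
      rcases lt_or_gt_of_ne hne with hlt | hgt
      · exact hPzeroRc w (Finset.mem_Icc.mp hw).1 y (hRsubRc u w hlt hy)
      · exact hPzeroR w u hu hgt y hy
    · intro hc; exact absurd (Finset.mem_Icc.mpr ⟨hu, huk⟩) hc
  have hNcN : ∀ k, Nc (k+1) ≤ N k := by
    intro k; rw [← (hNcompl k).2]; exact le_sup_left
  -- S pointwise via projections
  have hQS : ∀ k x, S (k+1) x = Sb (k+1) x - ∑ u ∈ Finset.Icc 1 k, P u (Sb (k+1) x) := by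
    intro k x
    rw [hSdef k]
    simp
  -- M diag
  have hMdiag : ∀ m x, M (m+1) (m+1) x = x := by
    intro m
    induction m with
    | zero => intro x; rw [hM11]; rfl
    | succ t ih =>
        intro x
        rw [hMrec (t+1) (t+2) (by omega) (by omega), show t+2-1 = t+1 from rfl]
        simp only [Finset.Icc_self, Finset.sum_singleton,
          LinearMap.comp_apply, hEdiag (t+1), LinearMap.id_apply]
        exact ih x
  -- TOP identity: sum of Sb v ∘ E v m equals S m
  have htop : ∀ m x, ∑ v ∈ Finset.Icc 1 (m+1), Sb v (E v (m+1) x) = S (m+1) x := by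
    intro m
    have hF : ∀ d i, i + d = m → ∀ x,
        (∑ v ∈ Finset.Icc (i+1) (m+1), Sb v (E v (m+1) x))
          - ∑ u ∈ Finset.Icc 1 i, P u (∑ v ∈ Finset.Icc (i+1) (m+1), Sb v (E v (m+1) x))
          = S (m+1) x := by
      intro d
      induction d with
      | zero =>
          intro i hi x
          have him : i = m := by omega
          subst him
          rw [Finset.Icc_self, Finset.sum_singleton, hEdiag i, LinearMap.id_apply]
          exact (hQS i x).symm
      | succ d ih =>
          intro i hi x
          have him : i + 1 ≤ m := by omega
          have hsplit : (∑ v ∈ Finset.Icc (i+1) (m+1), Sb v (E v (m+1) x))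
              = Sb (i+1) (E (i+1) (m+1) x)
                + ∑ v ∈ Finset.Icc (i+2) (m+1), Sb v (E v (m+1) x) :=
            sum_Icc_bot (by omega) _
          set y := ∑ v ∈ Finset.Icc (i+2) (m+1), Sb v (E v (m+1) x) with hy
          have hE : E (i+1) (m+1) x = -(T (i+1) y) := by
            rw [hErec m (i+1) (by omega) him]
            simp only [LinearMap.neg_apply, LinearMap.comp_apply, map_sum, hy,
              LinearMap.coe_sum, Finset.sum_apply]
          have hPSz : Sb (i+1) (T (i+1) y)
              - ∑ u ∈ Finset.Icc 1 i, P u (Sb (i+1) (T (i+1) y)) = P (i+1) y := by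
            rw [← hQS i (T (i+1) y)]
            exact hST (i+1) (by omega) y
          have hIH := ih (i+1) (by omega) x
          rw [show i+1+1 = i+2 by omega] at hIH
          rw [← hy, Finset.sum_Icc_succ_top (by omega)] at hIH
          rw [hsplit, hE, map_neg]
          simp only [map_add, map_neg]
          rw [Finset.sum_add_distrib, Finset.sum_neg_distrib]
          have key : (-(Sb (i+1) (T (i+1) y)) + y)
              - (-(∑ u ∈ Finset.Icc 1 i, P u (Sb (i+1) (T (i+1) y)))
                  + ∑ u ∈ Finset.Icc 1 i, P u y)
              = y - ((∑ u ∈ Finset.Icc 1 i, P u y)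
                  + (Sb (i+1) (T (i+1) y)
                      - ∑ u ∈ Finset.Icc 1 i, P u (Sb (i+1) (T (i+1) y)))) := by
            abel
          rw [key, hPSz]
          exact hIH
    have := hF m 0 (by omega)
    intro x
    have h0 := this x
    simpa using h0
  -- AUX identity
  have haux : ∀ m j, 1 ≤ j → j + 1 ≤ m + 1 → ∀ x,
      ∑ v ∈ Finset.Icc (j+1) (m+1), S (v-j) (E v (m+1) x) = S (m+1-j) x := by
    intro m j hj hjm x
    rw [Finset.sum_Icc_succ_top (by omega)]
    rw [hEdiag m, LinearMap.id_apply]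
    have hzero : ∑ v ∈ Finset.Icc (j+1) m, S (v-j) (E v (m+1) x) = 0 := by
      apply Finset.sum_eq_zero
      intro v hv
      rw [Finset.mem_Icc] at hv
      have hmem : E v (m+1) x ∈ Nc v := by
        rw [hErec m v (by omega) hv.2]
        simp only [LinearMap.neg_apply, LinearMap.comp_apply]
        exact neg_mem (hTrange v (by omega) _)
      have hmem2 : E v (m+1) x ∈ N (v-j) := by
        have hv1 := hNcN (v-1)
        rw [show v-1+1 = v by omega] at hv1
        exact hNmono (v-j) (v-1) (by omega) (hv1 hmem)
      obtain ⟨u, hu⟩ : ∃ u, v - j = u + 1 := ⟨v-j-1, by omega⟩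
      rw [hu]
      exact hSN u _ (hu ▸ hmem2)
    rw [hzero, zero_add]
  -- KEY IDENTITY
  have hKI : ∀ m j l : ℕ, 1 ≤ j → m = j + l → ∀ x,
      ∑ i ∈ Finset.range (l+1), L i (M (j+i) m x) = S (l+1) x := by
    intro m
    induction m using Nat.strong_induction_on with
    | _ m IH =>
    intro j l hj hm x
    obtain ⟨t, rfl⟩ : ∃ t, m = t + 1 := ⟨m - 1, by omega⟩
    rcases Nat.lt_or_ge j 2 with hj2 | hj2
    · -- j = 1, l = t
      have hjeq : j = 1 := by omega
      subst hjeq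
      have hlt : l = t := by omega
      subst hlt
      rcases Nat.eq_zero_or_pos l with ht0 | ht1
      · subst ht0
        simp only [Nat.zero_add, Finset.sum_range_one, Nat.add_zero, hM11,
          LinearMap.id_apply]
        exact (hS1 x).symm
      · obtain ⟨u, rfl⟩ : ∃ u, l = u + 1 := ⟨l - 1, by omega⟩
        rw [Finset.sum_range_succ']
        have h0 : L 0 (M (1+0) (u+1+1) x) = Sb 1 (E 1 (u+1+1) x) := by
          rw [show (1+0 : ℕ) = 1 by norm_num, hM1 (u+1) (by omega), hSb1]
        rw [h0]
        have hmain : ∀ i ∈ Finset.range (u+1),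
            L (i+1) (M (1+(i+1)) (u+1+1) x)
              = ∑ b ∈ Finset.Icc (i+1) (u+1), L (i+1) (M (i+1) b (E (b+1) (u+1+1) x)) := by
          intro i hi
          rw [Finset.mem_range] at hi
          rw [show 1+(i+1) = i+2 by omega, hMrec (u+1) (i+2) (by omega) (by omega),
            show i+2-1 = i+1 by omega]
          simp only [LinearMap.coe_sum, Finset.sum_apply, LinearMap.comp_apply, map_sum]
        rw [Finset.sum_congr rfl hmain]
        rw [Finset.sum_comm' (t' := Finset.Icc 1 (u+1)) (s' := fun b => Finset.range b)
          (by intro i b; simp only [Finset.mem_range, Finset.mem_Icc]; omega)]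
        have hinner : ∀ b ∈ Finset.Icc 1 (u+1),
            ∑ i ∈ Finset.range b, L (i+1) (M (i+1) b (E (b+1) (u+1+1) x))
              = Sb (b+1) (E (b+1) (u+1+1) x) := by
          intro b hb
          rw [Finset.mem_Icc] at hb
          obtain ⟨b', rfl⟩ : ∃ b', b = b' + 1 := ⟨b - 1, by omega⟩
          rw [hSbrec (b'+1) (by omega)]
          simp only [LinearMap.coe_sum, Finset.sum_apply, LinearMap.comp_apply]
          rw [sum_Icc_one]
        rw [Finset.sum_congr rfl hinner]
        have e1 : ∑ v ∈ Finset.Icc 1 (u+1+1), Sb v (E v (u+1+1) x)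
            = Sb 1 (E 1 (u+1+1) x)
              + ∑ b ∈ Finset.Icc 1 (u+1), Sb (b+1) (E (b+1) (u+1+1) x) := by
          rw [sum_Icc_bot (by omega : (1:ℕ) ≤ u+1+1) (fun v => Sb v (E v (u+1+1) x))]
          rw [sum_Icc_shift 1 (u+1) (fun v => Sb v (E v (u+1+1) x))]
        rw [← htop (u+1) x, e1, add_comm]
    · -- j = w + 2
      obtain ⟨w, rfl⟩ : ∃ w, j = w + 2 := ⟨j - 2, by omega⟩
      have hmain : ∀ i ∈ Finset.range (l+1),
          L i (M (w+2+i) (t+1) x)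
            = ∑ b ∈ Finset.Icc (w+1+i) t, L i (M (w+1+i) b (E (b+1) (t+1) x)) := by
        intro i hi
        rw [Finset.mem_range] at hi
        rw [hMrec t (w+2+i) (by omega) (by omega), show w+2+i-1 = w+1+i by omega]
        simp only [LinearMap.coe_sum, Finset.sum_apply, LinearMap.comp_apply, map_sum]
      rw [Finset.sum_congr rfl hmain]
      rw [Finset.sum_comm' (t' := Finset.Icc (w+1) t) (s' := fun b => Finset.range (b - w))
        (by intro i b; simp only [Finset.mem_range, Finset.mem_Icc]; omega)]
      have hinner : ∀ b ∈ Finset.Icc (w+1) t,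
          ∑ i ∈ Finset.range (b-w), L i (M (w+1+i) b (E (b+1) (t+1) x))
            = S (b-w) (E (b+1) (t+1) x) := by
        intro b hb
        rw [Finset.mem_Icc] at hb
        have hIH := IH b (by omega) (w+1) (b-w-1) (by omega) (by omega) (E (b+1) (t+1) x)
        rw [show b-w-1+1 = b-w by omega] at hIH
        exact hIH
      rw [Finset.sum_congr rfl hinner]
      have e2 : ∑ b ∈ Finset.Icc (w+1) t, S (b-w) (E (b+1) (t+1) x)
          = ∑ v ∈ Finset.Icc (w+1+1) (t+1), S (v-(w+1)) (E v (t+1) x) := by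
        rw [sum_Icc_shift (w+1) t (fun v => S (v-(w+1)) (E v (t+1) x))]
        exact Finset.sum_congr rfl (fun b hb => by
          rw [Finset.mem_Icc] at hb
          rw [show b+1-(w+1) = b-w by omega])
      rw [e2]
      have h3 := haux t (w+1) (by omega) (by omega) x
      rw [show t+1-(w+1) = l+1 by omega] at h3
      exact h3
  -- KI in subtraction form
  have hKIsub : ∀ m l, l + 1 ≤ m → ∀ x,
      ∑ i ∈ Finset.range (l+1), L i (M (m-l+i) m x) = S (l+1) x := by
    intro m l hl x
    exact hKI m (m-l) l (by omega) (by omega) x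
  -- more helpers
  have hMdiag' : ∀ m, 1 ≤ m → ∀ x, M m m x = x := by
    intro m hm x
    obtain ⟨t, rfl⟩ : ∃ t, m = t + 1 := ⟨m - 1, by omega⟩
    exact hMdiag t x
  have hQR0 : ∀ k u : ℕ, 1 ≤ u → u ≤ k → ∀ y ∈ R u,
      y - ∑ w ∈ Finset.Icc 1 k, P w y = 0 := by
    intro k u hu huk y hy
    rw [hQR k u hu huk y hy, sub_self]
  have hR1 : ∀ z : B, L 0 z ∈ R 1 := by
    intro z
    rw [hRdef 0]
    exact ⟨z, by rw [hN0]; trivial, (hS1 z)⟩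
  have hQadd3 : ∀ k (y z : B'),
      (y - ∑ w ∈ Finset.Icc 1 k, P w y = 0) →
      (z - ∑ w ∈ Finset.Icc 1 k, P w z = 0) →
      (y + z) - ∑ w ∈ Finset.Icc 1 k, P w (y + z) = 0 := by
    intro k y z h1 h2
    simp only [map_add, Finset.sum_add_distrib]
    rw [add_sub_add_comm, h1, h2, add_zero]
  have hQsum : ∀ (k : ℕ) (s : Finset ℕ) (g : ℕ → B'),
      (∀ u ∈ s, g u - ∑ w ∈ Finset.Icc 1 k, P w (g u) = 0) →
      (∑ u ∈ s, g u) - ∑ w ∈ Finset.Icc 1 k, P w (∑ u ∈ s, g u) = 0 := by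
    intro k s g h
    have e : (∑ u ∈ s, g u) - ∑ w ∈ Finset.Icc 1 k, P w (∑ u ∈ s, g u)
        = ∑ u ∈ s, (g u - ∑ w ∈ Finset.Icc 1 k, P w (g u)) := by
      rw [Finset.sum_sub_distrib]
      congr 1
      rw [Finset.sum_comm]
      exact Finset.sum_congr rfl (fun w _ => map_sum (P w) g s)
    rw [e]
    exact Finset.sum_eq_zero h
  -- MAIN INDUCTION : chains give membership in N, plus the projection property
  have hmain : ∀ m : ℕ,
      (∀ b : ℕ → B,
        (∀ l, l + 1 ≤ m → ∑ i ∈ Finset.range (l+1), L i (b (l-i)) = 0) → b 0 ∈ N m)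
      ∧ (∀ c : ℕ → B, c 0 = 0 →
          (∀ l, l + 1 ≤ m → ∑ i ∈ Finset.range (l+1), L i (c (l-i)) = 0) →
          (∑ i ∈ Finset.Icc 1 m, L i (c (m-i)))
            - ∑ u ∈ Finset.Icc 1 m, P u (∑ i ∈ Finset.Icc 1 m, L i (c (m-i))) = 0) := by
    intro m
    induction m with
    | zero =>
        constructor
        · intro b _
          rw [hN0]
          trivial
        · intro c hc0 hch
          simp
    | succ m ih =>
        constructor
        · -- chains of length m+1 have root in N (m+1)
          intro b hch
          rcases Nat.eq_zero_or_pos m with rfl | hm1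
          · have h0 := hch 0 (by omega)
            simp only [Nat.zero_add, Finset.range_one, Finset.sum_singleton, Nat.sub_zero] at h0
            rw [hNdef 0, hN0]
            refine ⟨LinearMap.mem_ker.mpr ?_, trivial⟩
            rw [hS1]
            simpa using h0
          · have hbN : b 0 ∈ N m := (ih.1) b (fun l hl => hch l (by omega))
            set c : ℕ → B := fun s => b s - M (m-s) m (b 0) with hcdef
            have hc0 : c 0 = 0 := by
              simp only [hcdef, Nat.sub_zero]
              rw [hMdiag' m (by omega) (b 0), sub_self]
            have hcch : ∀ l, l + 1 ≤ m →
                ∑ i ∈ Finset.range (l+1), L i (c (l-i)) = 0 := by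
              intro l hl
              have e : ∀ i ∈ Finset.range (l+1),
                  L i (c (l-i)) = L i (b (l-i)) - L i (M (m-l+i) m (b 0)) := by
                intro i hi
                rw [Finset.mem_range] at hi
                simp only [hcdef]
                rw [show m-(l-i) = m-l+i by omega, map_sub]
              rw [Finset.sum_congr rfl e, Finset.sum_sub_distrib, hch l (by omega),
                hKIsub m l hl (b 0), hSN l (b 0) (hNmono (l+1) m hl hbN), sub_zero]
            have hB := (ih.2) c hc0 hcch
            have hlev := hch m (by omega)
            rw [Finset.sum_range_succ'] at hlev
            rw [← sum_Icc_one m (fun u => L u (b (m-u))), Nat.sub_zero] at hlev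
            have hsplit : ∀ u ∈ Finset.Icc 1 m,
                L u (b (m-u)) = L u (c (m-u)) + L u (M u m (b 0)) := by
              intro u hu
              rw [Finset.mem_Icc] at hu
              simp only [hcdef]
              rw [map_sub, show m-(m-u) = u by omega]
              abel
            rw [Finset.sum_congr rfl hsplit, Finset.sum_add_distrib] at hlev
            have hSb : ∑ u ∈ Finset.Icc 1 m, L u (M u m (b 0)) = Sb (m+1) (b 0) := by
              rw [hSbrec m (by omega)]
              simp only [LinearMap.coe_sum, Finset.sum_apply, LinearMap.comp_apply]
            rw [hSb] at hlev
            have hL0R : L 0 (b m) - ∑ w ∈ Finset.Icc 1 m, P w (L 0 (b m)) = 0 :=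
              hQR0 m 1 (by omega) (by omega) _ (hR1 (b m))
            have hkey : S (m+1) (b 0) = 0 := by
              have hexp : S (m+1) (b 0)
                  = (((∑ u ∈ Finset.Icc 1 m, L u (c (m-u)) + Sb (m+1) (b 0)) + L 0 (b m))
                      - ∑ w ∈ Finset.Icc 1 m,
                          P w ((∑ u ∈ Finset.Icc 1 m, L u (c (m-u)) + Sb (m+1) (b 0))
                            + L 0 (b m)))
                    - ((∑ u ∈ Finset.Icc 1 m, L u (c (m-u)))
                        - ∑ w ∈ Finset.Icc 1 m,
                            P w (∑ u ∈ Finset.Icc 1 m, L u (c (m-u))))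
                    - ((L 0 (b m)) - ∑ w ∈ Finset.Icc 1 m, P w (L 0 (b m))) := by
                rw [hQS m (b 0)]
                simp only [map_add, Finset.sum_add_distrib]
                abel
              rw [hexp, hlev, hB, hL0R]
              simp
            rw [hNdef m]
            exact ⟨LinearMap.mem_ker.mpr hkey, hbN⟩
        · -- projection property for root-zero chains of length m+1
          intro c hc0 hch
          rcases Nat.eq_zero_or_pos m with rfl | hm1
          · simp [hc0]
          · have hdch : ∀ l, l + 1 ≤ m →
                ∑ i ∈ Finset.range (l+1), L i (c ((l-i)+1)) = 0 := by
              intro l hl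
              have h2 := hch (l+1) (by omega)
              rw [Finset.sum_range_succ] at h2
              rw [show l+1-(l+1) = 0 by omega, hc0, map_zero, add_zero] at h2
              rw [← h2]
              exact Finset.sum_congr rfl (fun i hi => by
                rw [Finset.mem_range] at hi
                rw [show (l-i)+1 = l+1-i by omega])
            have hc1N : c 1 ∈ N m := (ih.1) (fun s => c (s+1)) hdch
            set e : ℕ → B := fun s => c (s+1) - M (m-s) m (c 1) with hedef
            have he0 : e 0 = 0 := by
              simp only [hedef, Nat.sub_zero]
              rw [hMdiag' m (by omega) (c 1), sub_self]
            have hech : ∀ l, l + 1 ≤ m →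
                ∑ i ∈ Finset.range (l+1), L i (e (l-i)) = 0 := by
              intro l hl
              have e2 : ∀ i ∈ Finset.range (l+1),
                  L i (e (l-i)) = L i (c ((l-i)+1)) - L i (M (m-l+i) m (c 1)) := by
                intro i hi
                rw [Finset.mem_range] at hi
                simp only [hedef]
                rw [show m-(l-i) = m-l+i by omega, map_sub]
              rw [Finset.sum_congr rfl e2, Finset.sum_sub_distrib, hdch l hl,
                hKIsub m l hl (c 1), hSN l (c 1) (hNmono (l+1) m hl hc1N), sub_zero]
            have hBe := (ih.2) e he0 hech
            have hWc : ∑ i ∈ Finset.Icc 1 (m+1), L i (c (m+1-i))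
                = (∑ i ∈ Finset.Icc 1 m, L i (e (m-i))) + Sb (m+1) (c 1) := by
              rw [Finset.sum_Icc_succ_top (by omega : (1:ℕ) ≤ m+1)]
              rw [show m+1-(m+1) = 0 by omega, hc0, map_zero, add_zero]
              have e3 : ∀ i ∈ Finset.Icc 1 m,
                  L i (c (m+1-i)) = L i (e (m-i)) + L i (M i m (c 1)) := by
                intro i hi
                rw [Finset.mem_Icc] at hi
                simp only [hedef]
                rw [map_sub, show m-(m-i) = i by omega, show m+1-i = (m-i)+1 by omega]
                abel
              rw [Finset.sum_congr rfl e3, Finset.sum_add_distrib]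
              congr 1
              rw [hSbrec m (by omega)]
              simp only [LinearMap.coe_sum, Finset.sum_apply, LinearMap.comp_apply]
            rw [hWc]
            apply hQadd3 (m+1)
            · have hWe : (∑ i ∈ Finset.Icc 1 m, L i (e (m-i)))
                  = ∑ u ∈ Finset.Icc 1 m, P u (∑ i ∈ Finset.Icc 1 m, L i (e (m-i))) :=
                eq_of_sub_eq_zero hBe
              rw [hWe]
              apply hQsum
              intro u hu
              rw [Finset.mem_Icc] at hu
              exact hQR0 (m+1) u hu.1 (by omega) _
                (hPrange u hu.1 (LinearMap.mem_range_self _ _))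
            · have hSbdec : Sb (m+1) (c 1)
                  = S (m+1) (c 1) + ∑ u ∈ Finset.Icc 1 m, P u (Sb (m+1) (c 1)) := by
                rw [hQS m (c 1)]
                abel
              rw [hSbdec]
              apply hQadd3 (m+1)
              · exact hQR0 (m+1) (m+1) (by omega) (by omega) _
                  (by rw [hRdef m]; exact ⟨c 1, hc1N, rfl⟩)
              · apply hQsum
                intro u hu
                rw [Finset.mem_Icc] at hu
                exact hQR0 (m+1) u hu.1 (by omega) _
                  (hPrange u hu.1 (LinearMap.mem_range_self _ _))
  -- construction of chains from membership
  have hchain_of_N : ∀ m b0, b0 ∈ N m → ∃ b : ℕ → B, b 0 = b0 ∧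
      ∀ l, l + 1 ≤ m → ∑ i ∈ Finset.range (l+1), L i (b (l-i)) = 0 := by
    intro m b0 hb0
    rcases Nat.eq_zero_or_pos m with rfl | hm
    · exact ⟨fun _ => b0, rfl, fun l hl => absurd hl (by omega)⟩
    · refine ⟨fun s => M (m-s) m b0, ?_, ?_⟩
      · simp only [Nat.sub_zero]
        exact hMdiag' m hm b0
      · intro l hl
        have hcongr : ∀ i ∈ Finset.range (l+1),
            L i (M (m-(l-i)) m b0) = L i (M (m-l+i) m b0) := by
          intro i hi
          rw [Finset.mem_range] at hi
          rw [show m-(l-i) = m-l+i by omega]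
        rw [Finset.sum_congr rfl hcongr, hKIsub m l hl b0]
        exact hSN l b0 (hNmono (l+1) m hl hb0)

  -- ===== final assembly =====
  have hNiff : ∀ m b0, b0 ∈ N m ↔ ∃ b : ℕ → B, b 0 = b0 ∧
      ∀ l, l + 1 ≤ m → ∑ i ∈ Finset.range (l+1), L i (b (l-i)) = 0 := by
    intro m b0
    constructor
    · exact hchain_of_N m b0
    · rintro ⟨b, rfl, hbch⟩
      exact (hmain m).1 b hbch
  have hanti : ∀ m m' b0, m' ≤ m →
      (∃ b : ℕ → B, b 0 = b0 ∧
        ∀ l, l + 1 ≤ m → ∑ i ∈ Finset.range (l+1), L i (b (l-i)) = 0) →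
      (∃ b : ℕ → B, b 0 = b0 ∧
        ∀ l, l + 1 ≤ m' → ∑ i ∈ Finset.range (l+1), L i (b (l-i)) = 0) := by
    rintro m m' b0 h ⟨b, hb0, hch⟩
    exact ⟨b, hb0, fun l hl => hch l (by omega)⟩
  intro k
  have main1 : ∀ b0 : B, rank b0 = (k : ℕ∞) ↔ (b0 ∈ N k ∧ b0 ∉ N (k + 1)) := by
    intro b0
    rw [hrank b0]
    constructor
    · intro hsup
      constructor
      · rcases Nat.eq_zero_or_pos k with rfl | hkpos
        · rw [hN0]; trivial
        · by_contra hnot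
          have hub : ∀ x ∈ {x : ℕ∞ | ∃ m : ℕ, 1 ≤ m ∧
              (∃ b : ℕ → B, b 0 = b0 ∧
                ∀ l, l + 1 ≤ m → ∑ i ∈ Finset.range (l + 1), L i (b (l - i)) = 0) ∧
              x = (m : ℕ∞)}, x ≤ ((k-1 : ℕ) : ℕ∞) := by
            rintro x ⟨m, hm1, hchm, rfl⟩
            by_contra hgt
            rw [Nat.cast_le] at hgt
            exact hnot ((hNiff k b0).mpr (hanti m k b0 (by omega) hchm))
          have hle := sSup_le hub
          rw [hsup, Nat.cast_le] at hle
          omega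
      · intro hmem
        have hle : ((k+1 : ℕ) : ℕ∞) ≤ sSup {x : ℕ∞ | ∃ m : ℕ, 1 ≤ m ∧
            (∃ b : ℕ → B, b 0 = b0 ∧
              ∀ l, l + 1 ≤ m → ∑ i ∈ Finset.range (l + 1), L i (b (l - i)) = 0) ∧
            x = (m : ℕ∞)} :=
          le_sSup ⟨k+1, by omega, hchain_of_N (k+1) b0 hmem, rfl⟩
        rw [hsup, Nat.cast_le] at hle
        omega
    · rintro ⟨hk, hk1⟩
      apply le_antisymm
      · apply sSup_le
        rintro x ⟨m, hm1, hchm, rfl⟩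
        rw [Nat.cast_le]
        by_contra hgt
        exact hk1 ((hNiff (k+1) b0).mpr (hanti m (k+1) b0 (by omega) hchm))
      · rcases Nat.eq_zero_or_pos k with rfl | hkpos
        · simp only [Nat.cast_zero]
          exact zero_le
        · exact le_sSup ⟨k, hkpos, hchain_of_N k b0 hk, rfl⟩
  refine ⟨main1, ?_⟩
  intro b0 hb0 hb0ne
  apply (main1 b0).mpr
  refine ⟨hNcN k hb0, ?_⟩
  intro hmem
  have hbot : b0 ∈ Nc (k+1) ⊓ N (k+1) := ⟨hb0, hmem⟩
  rw [disjoint_iff.mp (hNcompl k).1] at hbot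
  exact hb0ne (by simpa using hbot)
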